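/- The Metropolized partial Verlet update preserves the Gibbs measure: with acceptance probability a_J(x) = min(1, exp(−β(H(θ_{h,J}(x)) − H(x)))), for every measurable set A ⊆ ℝ^ν × ℝ^ν, ∫ [ a_J(x)·1_A(θ_{h,J}(x)) + (1 − a_J(x))·1_A(R_J(x)) ] μ(dx) = μ(A). -/

import Mathlib

open MeasureTheory Matrix

/-- The gradient of `U : ℝ^ν → ℝ` in the standard basis. -/
noncomputable def grad {ν : ℕ} (U : (Fin ν → ℝ) → ℝ) (q : Fin ν → ℝ) : Fin ν → ℝ :=
  fun i => fderiv ℝ U q (Pi.single i 1)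

/-- Partial Verlet update: a Verlet step (stepsize `h`, diagonal mass matrix `M`,
potential `U`) applied only to the coordinates with index in `J`, all other
position and momentum coordinates being held fixed. -/
noncomputable def partialVerlet {ν : ℕ} (h : ℝ) (M : Matrix (Fin ν) (Fin ν) ℝ)
    (U : (Fin ν → ℝ) → ℝ) (J : Finset (Fin ν))
    (x : (Fin ν → ℝ) × (Fin ν → ℝ)) : (Fin ν → ℝ) × (Fin ν → ℝ) :=
  let phalf : Fin ν → ℝ := fun i =>
    if i ∈ J then x.2 i - (h / 2) * grad U x.1 i else x.2 i
  let q' : Fin ν → ℝ := fun i =>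
    if i ∈ J then x.1 i + h * (M i i)⁻¹ * phalf i else x.1 i
  let p' : Fin ν → ℝ := fun i =>
    if i ∈ J then phalf i - (h / 2) * grad U q' i else x.2 i
  (q', p')

/-- The map `R_J` flipping the sign of the momentum coordinates with index in `J`
and leaving all other coordinates unchanged. -/
def partialMomentumFlip {ν : ℕ} (J : Finset (Fin ν))
    (x : (Fin ν → ℝ) × (Fin ν → ℝ)) : (Fin ν → ℝ) × (Fin ν → ℝ) :=
  (x.1, fun i => if i ∈ J then -x.2 i else x.2 i)

/-- The Hamiltonian `H(q,p) = ½ pᵀM⁻¹p + U(q)`. -/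
noncomputable def hamiltonian {ν : ℕ} (M : Matrix (Fin ν) (Fin ν) ℝ)
    (U : (Fin ν → ℝ) → ℝ) (x : (Fin ν → ℝ) × (Fin ν → ℝ)) : ℝ :=
  (1 / 2) * (x.2 ⬝ᵥ (M⁻¹).mulVec x.2) + U x.1

/-- The Gibbs probability measure with density `Z⁻¹ e^{-βH}` with respect to
Lebesgue measure on phase space. -/
noncomputable def gibbs {ν : ℕ} (β : ℝ)
    (H : (Fin ν → ℝ) × (Fin ν → ℝ) → ℝ) :
    Measure ((Fin ν → ℝ) × (Fin ν → ℝ)) :=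
  volume.withDensity fun x =>
    ENNReal.ofReal ((∫ y, Real.exp (-β * H y))⁻¹ * Real.exp (-β * H x))

/-- The Metropolis acceptance probability `a(x) = min(1, e^{-β(H(Φx) - H(x))})`. -/
noncomputable def accept {ν : ℕ} (β : ℝ)
    (H : (Fin ν → ℝ) × (Fin ν → ℝ) → ℝ)
    (Φ : (Fin ν → ℝ) × (Fin ν → ℝ) → (Fin ν → ℝ) × (Fin ν → ℝ))
    (x : (Fin ν → ℝ) × (Fin ν → ℝ)) : ℝ :=
  min 1 (Real.exp (-β * (H (Φ x) - H x)))

namespace MetroAux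

variable {ν : ℕ} (h : ℝ) (M : Matrix (Fin ν) (Fin ν) ℝ) (U : (Fin ν → ℝ) → ℝ)
  (J : Finset (Fin ν))

noncomputable def pHalf (x : (Fin ν → ℝ) × (Fin ν → ℝ)) : Fin ν → ℝ :=
  fun i => if i ∈ J then x.2 i - (h / 2) * grad U x.1 i else x.2 i

noncomputable def Qnew (x : (Fin ν → ℝ) × (Fin ν → ℝ)) : Fin ν → ℝ :=
  fun i => if i ∈ J then x.1 i + h * (M i i)⁻¹ * pHalf h U J x i else x.1 i

noncomputable def Pnew (x : (Fin ν → ℝ) × (Fin ν → ℝ)) : Fin ν → ℝ :=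
  fun i => if i ∈ J then pHalf h U J x i - (h / 2) * grad U (Qnew h M U J x) i else x.2 i

def flipv (p : Fin ν → ℝ) : Fin ν → ℝ := fun i => if i ∈ J then -p i else p i

lemma partialVerlet_eq (x) : partialVerlet h M U J x = (Qnew h M U J x, Pnew h M U J x) := rfl

lemma flip_eq (x) : partialMomentumFlip J x = (x.1, flipv J x.2) := rfl

lemma flip_flip (x) : partialMomentumFlip J (partialMomentumFlip J x) = x := by
  unfold partialMomentumFlip
  refine Prod.ext rfl ?_
  funext i; by_cases hi : i ∈ J <;> simp [hi]

lemma theta_flip_theta (x) :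
    partialVerlet h M U J (partialMomentumFlip J (partialVerlet h M U J x))
      = partialMomentumFlip J x := by
  set y := partialMomentumFlip J (partialVerlet h M U J x) with hy
  have hy1 : y.1 = Qnew h M U J x := rfl
  have hy2 : y.2 = flipv J (Pnew h M U J x) := rfl
  have hph : pHalf h U J y = flipv J (pHalf h U J x) := by
    funext i
    by_cases hi : i ∈ J
    · have e1 : pHalf h U J y i = y.2 i - (h / 2) * grad U y.1 i := by
        simp only [pHalf, if_pos hi]
      rw [e1, hy1, hy2]
      simp only [flipv, if_pos hi, Pnew, pHalf]
      try simp only [if_pos hi]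
      try ring
    · have e1 : pHalf h U J y i = y.2 i := by simp only [pHalf, if_neg hi]
      rw [e1, hy2]
      try simp only [flipv, if_neg hi, Pnew, pHalf]
      try simp only [if_neg hi]
  have hQ : Qnew h M U J y = x.1 := by
    funext i
    by_cases hi : i ∈ J
    · have e1 : Qnew h M U J y i = y.1 i + h * (M i i)⁻¹ * pHalf h U J y i := by
        simp only [Qnew, if_pos hi]
      rw [e1, hph, hy1]
      simp only [flipv, if_pos hi, Qnew, pHalf]
      try simp only [if_pos hi]
      try ring
    · have e1 : Qnew h M U J y i = y.1 i := by simp only [Qnew, if_neg hi]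
      rw [e1, hy1]
      simp only [Qnew, if_neg hi]
  have hP : Pnew h M U J y = flipv J x.2 := by
    funext i
    unfold Pnew
    rw [hQ, hph]
    by_cases hi : i ∈ J
    · simp only [if_pos hi, flipv, pHalf]
      try simp only [if_pos hi]
      try ring
    · simp only [if_neg hi, hy2, flipv, Pnew]
      try simp only [if_neg hi]
  rw [partialVerlet_eq, hQ, hP, flip_eq]

noncomputable def vK (q : Fin ν → ℝ) : Fin ν → ℝ :=
  fun i => if i ∈ J then -((h / 2) * grad U q i) else 0

noncomputable def wD (p : Fin ν → ℝ) : Fin ν → ℝ :=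
  fun i => if i ∈ J then h * (M i i)⁻¹ * p i else 0

noncomputable def Kmap (x : (Fin ν → ℝ) × (Fin ν → ℝ)) : (Fin ν → ℝ) × (Fin ν → ℝ) :=
  (x.1, x.2 + vK h U J x.1)

noncomputable def Dmap (x : (Fin ν → ℝ) × (Fin ν → ℝ)) : (Fin ν → ℝ) × (Fin ν → ℝ) :=
  (x.1 + wD h M J x.2, x.2)

lemma verlet_decomp (x) :
    partialVerlet h M U J x = Kmap h U J (Dmap h M J (Kmap h U J x)) := by
  have h1 : x.2 + vK h U J x.1 = pHalf h U J x := by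
    funext i; by_cases hi : i ∈ J <;>
      simp only [vK, pHalf, if_pos, if_neg, hi, Pi.add_apply, if_true, if_false, add_zero,
        ite_true, ite_false] <;> ring
  have h2 : x.1 + wD h M J (pHalf h U J x) = Qnew h M U J x := by
    funext i; by_cases hi : i ∈ J <;> simp [wD, Qnew, hi, Pi.add_apply]
  have h3 : pHalf h U J x + vK h U J (Qnew h M U J x) = Pnew h M U J x := by
    funext i
    by_cases hi : i ∈ J
    · simp only [vK, Pnew, if_pos hi, Pi.add_apply, ite_true]; ring
    · simp only [vK, Pnew, pHalf, if_neg hi, Pi.add_apply, ite_false, add_zero]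
  rw [partialVerlet_eq]
  show _ = Kmap h U J (Dmap h M J (x.1, x.2 + vK h U J x.1))
  rw [h1]
  show _ = Kmap h U J (x.1 + wD h M J (pHalf h U J x), pHalf h U J x)
  rw [h2]
  show _ = (Qnew h M U J x, pHalf h U J x + vK h U J (Qnew h M U J x))
  rw [h3]

lemma grad_continuous (hU : ContDiff ℝ 1 U) : Continuous (grad U) := by
  have h1 : Continuous (fderiv ℝ U) := hU.continuous_fderiv one_ne_zero
  exact continuous_pi fun i => h1.clm_apply continuous_const

lemma vK_continuous (hU : ContDiff ℝ 1 U) : Continuous (vK h U J) := by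
  refine continuous_pi fun i => ?_
  by_cases hi : i ∈ J
  · simp only [vK, if_pos hi]
    exact (continuous_const.mul ((continuous_apply i).comp (grad_continuous U hU))).neg
  · simp only [vK, if_neg hi]; exact continuous_const

lemma wD_continuous : Continuous (wD h M J) := by
  refine continuous_pi fun i => ?_
  by_cases hi : i ∈ J
  · simp only [wD, if_pos hi]
    exact continuous_const.mul (continuous_apply i)
  · simp only [wD, if_neg hi]; exact continuous_const

lemma Kmap_mp (hU : ContDiff ℝ 1 U) :
    MeasurePreserving (Kmap h U J) volume volume := by
  rw [Measure.volume_eq_prod _ _]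
  refine (MeasurePreserving.id volume).skew_product (g := fun q p => p + vK h U J q) ?_
    (Filter.Eventually.of_forall fun q =>
      (measurePreserving_add_right volume (vK h U J q)).map_eq)
  have : Measurable fun z : (Fin ν → ℝ) × (Fin ν → ℝ) => z.2 + vK h U J z.1 :=
    measurable_snd.add ((vK_continuous h U J hU).measurable.comp measurable_fst)
  exact this

lemma Dmap_mp : MeasurePreserving (Dmap h M J) volume volume := by
  have hsw : MeasurePreserving (Prod.swap :
      ((Fin ν → ℝ) × (Fin ν → ℝ)) → ((Fin ν → ℝ) × (Fin ν → ℝ))) volume volume := by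
    rw [Measure.volume_eq_prod _ _]; exact Measure.measurePreserving_swap
  have hK : MeasurePreserving
      (fun x : (Fin ν → ℝ) × (Fin ν → ℝ) => (x.1, x.2 + wD h M J x.1))
      volume volume := by
    rw [Measure.volume_eq_prod _ _]
    refine (MeasurePreserving.id volume).skew_product (g := fun q p => p + wD h M J q) ?_
      (Filter.Eventually.of_forall fun q =>
        (measurePreserving_add_right volume (wD h M J q)).map_eq)
    have : Measurable fun z : (Fin ν → ℝ) × (Fin ν → ℝ) => z.2 + wD h M J z.1 :=
      measurable_snd.add ((wD_continuous h M J).measurable.comp measurable_fst)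
    exact this
  have : Dmap h M J = Prod.swap ∘ (fun x : (Fin ν → ℝ) × (Fin ν → ℝ) =>
      (x.1, x.2 + wD h M J x.1)) ∘ Prod.swap := rfl
  rw [this]
  exact hsw.comp (hK.comp hsw)

lemma verlet_mp (hU : ContDiff ℝ 1 U) :
    MeasurePreserving (partialVerlet h M U J) volume volume := by
  have := (Kmap_mp h U J hU).comp ((Dmap_mp h M J).comp (Kmap_mp h U J hU))
  have heq : (Kmap h U J) ∘ (Dmap h M J) ∘ (Kmap h U J) = partialVerlet h M U J := by
    funext x; exact (verlet_decomp h M U J x).symm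
  rwa [heq] at this

lemma flipv_mp : MeasurePreserving (flipv J (ν := ν)) volume volume := by
  have : MeasurePreserving (fun (a : Fin ν → ℝ) (i : Fin ν) =>
      (fun t : ℝ => if i ∈ J then -t else t) (a i)) volume volume := by
    apply volume_preserving_pi (f := fun (i : Fin ν) (t : ℝ) => if i ∈ J then -t else t)
    intro i
    by_cases hi : i ∈ J
    · simp only [if_pos hi]; exact Measure.measurePreserving_neg volume
    · simp only [if_neg hi]; exact MeasurePreserving.id volume
  exact this

lemma flip_mp : MeasurePreserving (partialMomentumFlip J (ν := ν)) volume volume := by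
  have : partialMomentumFlip J (ν := ν) = Prod.map id (flipv J) := rfl
  rw [this, Measure.volume_eq_prod _ _]
  exact (MeasurePreserving.id volume).prod (flipv_mp J)

lemma flip_continuous : Continuous (partialMomentumFlip J (ν := ν)) := by
  refine continuous_fst.prodMk (continuous_pi fun i => ?_)
  by_cases hi : i ∈ J
  · simp only [partialMomentumFlip, if_pos hi]
    exact ((continuous_apply i).comp continuous_snd).neg
  · simp only [partialMomentumFlip, if_neg hi]
    exact (continuous_apply i).comp continuous_snd

lemma verlet_continuous (hU : ContDiff ℝ 1 U) : Continuous (partialVerlet h M U J) := by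
  have hK : Continuous (Kmap h U J) :=
    continuous_fst.prodMk (continuous_snd.add ((vK_continuous h U J hU).comp continuous_fst))
  have hD : Continuous (Dmap h M J) :=
    (continuous_fst.add ((wD_continuous h M J).comp continuous_snd)).prodMk continuous_snd
  have heq : (Kmap h U J) ∘ (Dmap h M J) ∘ (Kmap h U J) = partialVerlet h M U J := by
    funext x; exact (verlet_decomp h M U J x).symm
  rw [← heq]
  exact hK.comp (hD.comp hK)

end MetroAux

namespace MetroAux2
open MetroAux

variable {ν : ℕ} (M : Matrix (Fin ν) (Fin ν) ℝ) (U : (Fin ν → ℝ) → ℝ)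
  (J : Finset (Fin ν))

lemma ham_flip (hMdiag : ∀ i j, i ≠ j → M i j = 0) (x) :
    hamiltonian M U (partialMomentumFlip J x) = hamiltonian M U x := by
  have hM : M = Matrix.diagonal (fun i => M i i) := by
    ext i j
    by_cases hij : i = j
    · subst hij; simp
    · rw [Matrix.diagonal_apply_ne _ hij]; exact hMdiag i j hij
  unfold hamiltonian partialMomentumFlip
  simp only
  congr 1
  rw [hM, Matrix.inv_diagonal]
  simp only [dotProduct, Matrix.mulVec_diagonal]
  congr 1
  apply Finset.sum_congr rfl
  intro i _
  by_cases hi : i ∈ J <;> simp only [if_pos, if_neg, hi, ite_true, ite_false] <;> ring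

lemma ham_continuous (hU : ContDiff ℝ 1 U) : Continuous (hamiltonian M U) := by
  unfold hamiltonian
  refine (continuous_const.mul ?_).add (hU.continuous.comp continuous_fst)
  simp only [dotProduct, Matrix.mulVec, dotProduct]
  apply continuous_finset_sum
  intro i _
  refine ((continuous_apply i).comp continuous_snd).mul ?_
  apply continuous_finset_sum
  intro j _
  exact continuous_const.mul ((continuous_apply j).comp continuous_snd)

end MetroAux2

open MetroAux MetroAux2

/-- The Metropolized partial Verlet update preserves the Gibbs measure. -/
theorem metropolized_partialVerlet_preserves_gibbs
    (ν : ℕ) (h β : ℝ) (hh : 0 < h) (hβ : 0 < β)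
    (M : Matrix (Fin ν) (Fin ν) ℝ)
    (hMdiag : ∀ i j, i ≠ j → M i j = 0) (hMpos : ∀ i, 0 < M i i)
    (U : (Fin ν → ℝ) → ℝ) (hU : ContDiff ℝ 1 U)
    (hUint : Integrable (fun q => Real.exp (-β * U q)) volume)
    (hHint : Integrable (fun x => Real.exp (-β * hamiltonian M U x)) volume)
    (J : Finset (Fin ν)) :
    ∀ A : Set ((Fin ν → ℝ) × (Fin ν → ℝ)), MeasurableSet A →
      ∫ x, (accept β (hamiltonian M U) (partialVerlet h M U J) x
              * A.indicator 1 (partialVerlet h M U J x)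
            + (1 - accept β (hamiltonian M U) (partialVerlet h M U J) x)
              * A.indicator 1 (partialMomentumFlip J x))
        ∂(gibbs β (hamiltonian M U))
      = ((gibbs β (hamiltonian M U)) A).toReal := by
  intro A hA
  classical
  set θ : (Fin ν → ℝ) × (Fin ν → ℝ) → (Fin ν → ℝ) × (Fin ν → ℝ) := partialVerlet h M U J with hθdef
  set R : (Fin ν → ℝ) × (Fin ν → ℝ) → (Fin ν → ℝ) × (Fin ν → ℝ) := partialMomentumFlip J with hRdef
  set H : (Fin ν → ℝ) × (Fin ν → ℝ) → ℝ := hamiltonian M U with hHdef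
  have hθc : Continuous θ := verlet_continuous h M U J hU
  have hRc : Continuous R := flip_continuous J
  have hHc : Continuous H := ham_continuous M U hU
  have hHR : ∀ x, H (R x) = H x := fun x => ham_flip M U J hMdiag x
  have hθRθ : ∀ x, θ (R (θ x)) = R x := fun x => theta_flip_theta h M U J x
  have hRR : ∀ x, R (R x) = x := fun x => flip_flip J x
  have hθmp : MeasurePreserving θ volume volume := verlet_mp h M U J hU
  have hRmp : MeasurePreserving R volume volume := flip_mp J
  set Z : ℝ := ∫ y, Real.exp (-β * H y) with hZdef
  have hZpos : 0 < Z := by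
    rw [hZdef]
    rw [integral_pos_iff_support_of_nonneg_ae
      (Filter.Eventually.of_forall fun x => (Real.exp_pos _).le) hHint]
    have hs : (Function.support fun x : (Fin ν → ℝ) × (Fin ν → ℝ) => Real.exp (-β * H x)) = Set.univ := by
      ext x; simp [Function.mem_support, Real.exp_ne_zero]
    rw [hs]
    exact isOpen_univ.measure_pos volume Set.univ_nonempty
  set ρ : (Fin ν → ℝ) × (Fin ν → ℝ) → ℝ := fun x => Z⁻¹ * Real.exp (-β * H x) with hρdef
  have hρpos : ∀ x, 0 < ρ x := fun x => mul_pos (inv_pos.mpr hZpos) (Real.exp_pos _)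
  have hρint : Integrable ρ volume := hHint.const_mul _
  have hρcont : Continuous ρ :=
    continuous_const.mul (Real.continuous_exp.comp (continuous_const.mul hHc))
  have hρR : ∀ x, ρ (R x) = ρ x := by intro x; simp only [hρdef, hHR]
  -- rewrite the gibbs integral as a weighted Lebesgue integral
  have hgibbs_eq : gibbs β H = volume.withDensity fun x => ((ρ x).toNNReal : ENNReal) := by
    unfold gibbs
    congr 1
  have hgibbs : ∀ G : (Fin ν → ℝ) × (Fin ν → ℝ) → ℝ, ∫ x, G x ∂(gibbs β H) = ∫ x, ρ x * G x := by
    intro G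
    rw [hgibbs_eq, integral_withDensity_eq_integral_smul
      (hρcont.measurable.real_toNNReal) G]
    refine integral_congr_ae (Filter.Eventually.of_forall fun x => ?_)
    simp [NNReal.smul_def, Real.coe_toNNReal _ (hρpos x).le]
  -- the right-hand side
  have hRHS : ((gibbs β H) A).toReal = ∫ x, ρ x * A.indicator 1 x := by
    have h1 : (gibbs β H) A = ENNReal.ofReal (∫ x in A, ρ x) := by
      rw [hgibbs_eq, withDensity_apply _ hA]
      rw [MeasureTheory.ofReal_integral_eq_lintegral_ofReal hρint.restrict
        (Filter.Eventually.of_forall fun x => (hρpos x).le)]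
      refine lintegral_congr fun x => ?_
      simp [ENNReal.ofReal, Real.toNNReal]
    rw [h1, ENNReal.toReal_ofReal (integral_nonneg fun x => (hρpos x).le)]
    rw [← integral_indicator hA]
    refine integral_congr_ae (Filter.Eventually.of_forall fun x => ?_)
    by_cases hx : x ∈ A <;> simp [hx]
  rw [hgibbs, hRHS]
  -- notation
  set a : (Fin ν → ℝ) × (Fin ν → ℝ) → ℝ := accept β H θ with hadef
  set F : (Fin ν → ℝ) × (Fin ν → ℝ) → ℝ := fun x => min (ρ x) (ρ (θ x)) with hFdef
  set indA : (Fin ν → ℝ) × (Fin ν → ℝ) → ℝ := A.indicator 1 with hindAdef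
  have hindA_meas : Measurable indA := measurable_const.indicator hA
  have hindA_nonneg : ∀ x, 0 ≤ indA x := by
    intro x; by_cases hx : x ∈ A <;> simp [hindAdef, hx]
  have hindA_le : ∀ x, indA x ≤ 1 := by
    intro x; by_cases hx : x ∈ A <;> simp [hindAdef, hx]
  have hρa : ∀ x, ρ x * a x = F x := by
    intro x
    have hexp : ρ x * Real.exp (-β * (H (θ x) - H x)) = ρ (θ x) := by
      simp only [hρdef]
      rw [mul_assoc, ← Real.exp_add]
      congr 2
      ring
    have : ρ x * a x = min (ρ x * 1) (ρ x * Real.exp (-β * (H (θ x) - H x))) :=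
      mul_min_of_nonneg _ _ (hρpos x).le
    rw [this, mul_one, hexp, hFdef]
  have hFcont : Continuous F := hρcont.min (hρcont.comp hθc)
  have hF_nonneg : ∀ x, 0 ≤ F x := fun x => le_min (hρpos x).le (hρpos (θ x)).le
  have hF_le : ∀ x, F x ≤ ρ x := fun x => min_le_left _ _
  -- integrability of the pieces
  have hbound : ∀ (S : (Fin ν → ℝ) × (Fin ν → ℝ) → (Fin ν → ℝ) × (Fin ν → ℝ)), (∀ x, |F x * indA (S x)| ≤ ρ x) := by
    intro S x
    rw [abs_of_nonneg (mul_nonneg (hF_nonneg x) (hindA_nonneg _))]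
    calc F x * indA (S x) ≤ F x * 1 :=
          mul_le_mul_of_nonneg_left (hindA_le _) (hF_nonneg x)
      _ = F x := mul_one _
      _ ≤ ρ x := hF_le x
  have hboundρ : ∀ (S : (Fin ν → ℝ) × (Fin ν → ℝ) → (Fin ν → ℝ) × (Fin ν → ℝ)), (∀ x, |ρ x * indA (S x)| ≤ ρ x) := by
    intro S x
    rw [abs_of_nonneg (mul_nonneg (hρpos x).le (hindA_nonneg _))]
    calc ρ x * indA (S x) ≤ ρ x * 1 :=
          mul_le_mul_of_nonneg_left (hindA_le _) (hρpos x).le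
      _ = ρ x := mul_one _
  have hint1 : Integrable (fun x => F x * indA (θ x)) volume :=
    hρint.mono' ((hFcont.measurable.mul (hindA_meas.comp hθc.measurable)).aestronglyMeasurable)
      (Filter.Eventually.of_forall (hbound θ))
  have hint3 : Integrable (fun x => F x * indA (R x)) volume :=
    hρint.mono' ((hFcont.measurable.mul (hindA_meas.comp hRc.measurable)).aestronglyMeasurable)
      (Filter.Eventually.of_forall (hbound R))
  have hint2 : Integrable (fun x => ρ x * indA (R x)) volume :=
    hρint.mono' ((hρcont.measurable.mul (hindA_meas.comp hRc.measurable)).aestronglyMeasurable)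
      (Filter.Eventually.of_forall (hboundρ R))
  -- pointwise identity for the integrand
  have hpt : ∀ x, ρ x * (a x * indA (θ x) + (1 - a x) * indA (R x))
      = F x * indA (θ x) + (ρ x * indA (R x) - F x * indA (R x)) := by
    intro x
    have e : ρ x * (a x * indA (θ x) + (1 - a x) * indA (R x))
        = (ρ x * a x) * indA (θ x) + (ρ x * indA (R x) - (ρ x * a x) * indA (R x)) := by ring
    rw [e, hρa x]
  rw [integral_congr_ae (Filter.Eventually.of_forall hpt)]
  have e1 : ∫ x, (F x * indA (θ x) + (ρ x * indA (R x) - F x * indA (R x)))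
      = (∫ x, F x * indA (θ x)) + ∫ x, (ρ x * indA (R x) - F x * indA (R x)) :=
    integral_add hint1 (hint2.sub hint3)
  have e2 : ∫ x, (ρ x * indA (R x) - F x * indA (R x))
      = (∫ x, ρ x * indA (R x)) - ∫ x, F x * indA (R x) := integral_sub hint2 hint3
  rw [e1, e2]
  -- the measurable equivalences given by T := R ∘ θ and R
  set T : (Fin ν → ℝ) × (Fin ν → ℝ) → (Fin ν → ℝ) × (Fin ν → ℝ) := fun x => R (θ x) with hTdef
  have hTmp : MeasurePreserving T volume volume := hRmp.comp hθmp
  have hTT : ∀ x, T (T x) = x := by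
    intro x
    simp only [hTdef]
    rw [hθRθ x, hRR]
  have hTc : Continuous T := hRc.comp hθc
  let eT : (Fin ν → ℝ) × (Fin ν → ℝ) ≃ᵐ (Fin ν → ℝ) × (Fin ν → ℝ) :=
    { toFun := T, invFun := T, left_inv := hTT, right_inv := hTT,
      measurable_toFun := hTc.measurable, measurable_invFun := hTc.measurable }
  let eR : (Fin ν → ℝ) × (Fin ν → ℝ) ≃ᵐ (Fin ν → ℝ) × (Fin ν → ℝ) :=
    { toFun := R, invFun := R, left_inv := hRR, right_inv := hRR,
      measurable_toFun := hRc.measurable, measurable_invFun := hRc.measurable }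
  have hsub1 : ∫ x, F x * indA (θ x) = ∫ x, F x * indA (R x) := by
    have hcomp := hTmp.integral_comp eT.measurableEmbedding (fun y => F y * indA (R y))
    rw [← hcomp]
    refine integral_congr_ae (Filter.Eventually.of_forall fun x => ?_)
    have h1 : R (T x) = θ x := by simp only [hTdef]; rw [hRR]
    have h2 : F (T x) = F x := by
      simp only [hFdef, hTdef]
      rw [hρR (θ x), hθRθ x, hρR x, min_comm]
    show F x * indA (θ x) = F (T x) * indA (R (T x))
    rw [h1, h2]
  have hsub2 : ∫ x, ρ x * indA (R x) = ∫ x, ρ x * indA x := by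
    have hcomp := hRmp.integral_comp eR.measurableEmbedding (fun y => ρ y * indA y)
    rw [← hcomp]
    refine integral_congr_ae (Filter.Eventually.of_forall fun x => ?_)
    show ρ x * indA (R x) = ρ (R x) * indA (R x)
    rw [hρR x]
  rw [hsub1, hsub2]
  ring
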